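/- Let Q be the quadratic form x ↦ −x² on ℝ (viewed as a module over itself). The submonoid of CliffordAlgebra Q generated by the set {ι(v) : v ∈ ℝ, v² = 1} (that is, generated by ι(1) and ι(−1)) is isomorphic, as a monoid, to the cyclic group Multiplicative (ZMod 4). (This is the paper's claim that the negative Pin group in dimension one satisfies Pin⁻₁ ≅ ℤ/4.) -/
import Mathlib

open CliffordAlgebra

/-- The quadratic form `x ↦ -x²` on `ℝ`. -/
noncomputable def negSqForm : QuadraticForm ℝ ℝ := -QuadraticMap.sq

lemma orderOf_I : orderOf Complex.I = 4 := by
  rw [orderOf_eq_iff (by norm_num)]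
  refine ⟨Complex.I_pow_four, ?_⟩
  intro m hm hm'
  set_option linter.unnecessarySeqFocus false in
  interval_cases m <;>
    simp [pow_succ, Complex.I_mul_I, Complex.ext_iff] <;> norm_num

lemma I_pow_mod (x : ℕ) : Complex.I ^ (x % 4) = Complex.I ^ x := by
  conv_rhs => rw [← Nat.div_add_mod x 4]
  rw [pow_add, pow_mul, Complex.I_pow_four, one_pow, one_mul]

/-- The submonoid of `ℂ` generated by `I` and `-I` is `ℤ/4`. -/
noncomputable def closureIEquiv :
    Multiplicative (ZMod 4) ≃* Submonoid.closure ({Complex.I, -Complex.I} : Set ℂ) := by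
  set T := Submonoid.closure ({Complex.I, -Complex.I} : Set ℂ) with hT
  have hI : Complex.I ∈ T := Submonoid.subset_closure (by left; rfl)
  have hI3 : -Complex.I = Complex.I ^ (3 : ℕ) := by
    rw [pow_succ, pow_two, Complex.I_mul_I]; ring
  have key : ∀ n : ZMod 4, Complex.I ^ n.val ∈ T := fun n => pow_mem hI _
  let f : Multiplicative (ZMod 4) →* T :=
    { toFun := fun n => ⟨Complex.I ^ (Multiplicative.toAdd n).val, key _⟩
      map_one' := by
        ext
        show Complex.I ^ (0 : ZMod 4).val = 1
        simp [ZMod.val_zero]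
      map_mul' := by
        intro a b
        ext
        show Complex.I ^ (Multiplicative.toAdd a + Multiplicative.toAdd b).val
            = Complex.I ^ _ * Complex.I ^ _
        rw [ZMod.val_add, I_pow_mod, pow_add] }
  refine MulEquiv.ofBijective f ?_
  constructor
  · intro a b hab
    have h1 : Complex.I ^ (Multiplicative.toAdd a).val
        = Complex.I ^ (Multiplicative.toAdd b).val := congrArg Subtype.val hab
    have ha4 : (Multiplicative.toAdd a).val < 4 := ZMod.val_lt _
    have hb4 : (Multiplicative.toAdd b).val < 4 := ZMod.val_lt _
    have h2 : (Multiplicative.toAdd a).val = (Multiplicative.toAdd b).val := by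
      generalize (Multiplicative.toAdd a).val = m at h1 ha4 ⊢
      generalize (Multiplicative.toAdd b).val = k at h1 hb4 ⊢
      interval_cases m <;> interval_cases k <;>
        first
          | rfl
          | (norm_num [pow_succ, Complex.I_mul_I, Complex.ext_iff] at h1)
    exact Multiplicative.toAdd.injective (ZMod.val_injective _ h2)
  · rintro ⟨x, hx⟩
    induction hx using Submonoid.closure_induction with
    | mem z hz =>
      rcases hz with rfl | rfl
      · exact ⟨Multiplicative.ofAdd (1 : ZMod 4), by
          ext
          show Complex.I ^ ((1 : ZMod 4)).val = Complex.I
          rw [show ((1 : ZMod 4)).val = 1 from rfl, pow_one]⟩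
      · exact ⟨Multiplicative.ofAdd (3 : ZMod 4), by
          ext
          show Complex.I ^ ((3 : ZMod 4)).val = -Complex.I
          rw [show ((3 : ZMod 4)).val = 3 from rfl]
          exact hI3.symm⟩
    | one => exact ⟨1, rfl⟩
    | mul y z hy hz ihy ihz =>
      obtain ⟨a, ha⟩ := ihy
      obtain ⟨b, hb⟩ := ihz
      refine ⟨a * b, ?_⟩
      have ha' := congrArg Subtype.val ha
      have hb' := congrArg Subtype.val hb
      ext
      show Complex.I ^ (Multiplicative.toAdd a + Multiplicative.toAdd b).val = y * z
      rw [ZMod.val_add, I_pow_mod, pow_add]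
      exact congrArg₂ (· * ·) ha' hb'

/-- For the quadratic form `Q(x) = -x²` on `ℝ`, the submonoid of the Clifford
algebra of `Q` generated by `{ι v : v² = 1}` (i.e. by `ι 1` and `ι (-1)`) is isomorphic, as a
monoid, to the cyclic group `ℤ/4`; this is the claim `Pin⁻₁ ≅ ℤ/4`. -/
theorem pinMinus_one_iso_zmodFour :
    Nonempty
      ((Submonoid.closure
          {x : CliffordAlgebra negSqForm | ∃ v : ℝ, v ^ 2 = 1 ∧ ι negSqForm v = x}) ≃*
        Multiplicative (ZMod 4)) := by
  rw [show negSqForm = CliffordAlgebraComplex.Q from rfl]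
  set e : CliffordAlgebra CliffordAlgebraComplex.Q ≃* ℂ :=
    CliffordAlgebraComplex.equiv.toMulEquiv with he
  set S := Submonoid.closure
      {x : CliffordAlgebra CliffordAlgebraComplex.Q | ∃ v : ℝ, v ^ 2 = 1 ∧ ι _ v = x} with hS
  have himg : (e : CliffordAlgebra CliffordAlgebraComplex.Q →* ℂ) ''
      {x : CliffordAlgebra CliffordAlgebraComplex.Q | ∃ v : ℝ, v ^ 2 = 1 ∧ ι _ v = x}
      = {Complex.I, -Complex.I} := by
    ext z
    constructor
    · rintro ⟨x, ⟨v, hv, rfl⟩, rfl⟩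
      have : v = 1 ∨ v = -1 := mul_self_eq_one_iff.mp (by rw [← sq]; exact hv)
      rcases this with rfl | rfl
      · left
        show CliffordAlgebraComplex.toComplex _ = _
        simp
      · right
        show CliffordAlgebraComplex.toComplex _ = _
        simp
    · rintro (rfl | rfl)
      · exact ⟨ι _ 1, ⟨1, by norm_num⟩, by
          show CliffordAlgebraComplex.toComplex _ = _; simp⟩
      · exact ⟨ι _ (-1), ⟨-1, by norm_num⟩, by
          show CliffordAlgebraComplex.toComplex _ = _; simp⟩
  have hmap : S.map (e : CliffordAlgebra CliffordAlgebraComplex.Q →* ℂ)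
      = Submonoid.closure ({Complex.I, -Complex.I} : Set ℂ) := by
    rw [hS, MonoidHom.map_mclosure, himg]
  exact ⟨((e.submonoidMap S).trans (MulEquiv.submonoidCongr hmap)).trans closureIEquiv.symm⟩
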